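/- Monotonicity of the transformed distance in the inner product: fix m and let q be a unit vector. For x, y with ||x||_2 = ||y||_2 ≤ U < 1, we have ||Q(q) - P(x)||_2 < ||Q(q) - P(y)||_2 if and only if q^T x > q^T y. -/

import Mathlib

noncomputable def alshP (D m : ℕ) (x : EuclideanSpace ℝ (Fin D)) :
    EuclideanSpace ℝ (Fin (D + m)) :=
  WithLp.toLp 2 (fun i => Fin.addCases (fun j => x j) (fun j => ‖x‖ ^ (2 ^ (j.val + 1))) i)

noncomputable def alshQ (D m : ℕ) (q : EuclideanSpace ℝ (Fin D)) :
    EuclideanSpace ℝ (Fin (D + m)) :=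
  WithLp.toLp 2 (fun i => Fin.addCases (fun j => q j) (fun _ => 1 / 2) i)

lemma alsh_norm_sq (D m : ℕ) (q x : EuclideanSpace ℝ (Fin D)) :
    ‖alshQ D m q - alshP D m x‖ ^ 2 =
      (∑ j : Fin D, (q j - x j) ^ 2) +
      ∑ j : Fin m, (1 / 2 - ‖x‖ ^ (2 ^ (j.val + 1))) ^ 2 := by
  rw [EuclideanSpace.norm_eq, Real.sq_sqrt (by positivity)]
  rw [Fin.sum_univ_add]
  congr 1
  · refine Finset.sum_congr rfl fun j _ => ?_
    simp [alshQ, alshP, sq_abs]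
  · refine Finset.sum_congr rfl fun j _ => ?_
    simp [alshQ, alshP, sq_abs]

lemma norm_sq_sum (D : ℕ) (x : EuclideanSpace ℝ (Fin D)) :
    ‖x‖ ^ 2 = ∑ j : Fin D, (x j) ^ 2 := by
  rw [EuclideanSpace.norm_eq, Real.sq_sqrt (by positivity)]
  exact Finset.sum_congr rfl fun j _ => by rw [Real.norm_eq_abs, sq_abs]

theorem alsh_distance_monotone (D m : ℕ) (hm : 1 ≤ m) (U : ℝ) (hU : U < 1)
    (q : EuclideanSpace ℝ (Fin D)) (hq : ‖q‖ = 1)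
    (x y : EuclideanSpace ℝ (Fin D)) (hxy : ‖x‖ = ‖y‖) (hx : ‖x‖ ≤ U) :
    ‖alshQ D m q - alshP D m x‖ < ‖alshQ D m q - alshP D m y‖ ↔
      (∑ i, q i * y i) < ∑ i, q i * x i := by
  rw [← pow_lt_pow_iff_left₀ (norm_nonneg _) (norm_nonneg _) two_ne_zero,
    alsh_norm_sq, alsh_norm_sq, hxy]
  have hexp : ∀ z : EuclideanSpace ℝ (Fin D),
      ∑ j : Fin D, (q j - z j) ^ 2 =
        ∑ j : Fin D, (q j) ^ 2 - 2 * ∑ j : Fin D, q j * z j + ∑ j : Fin D, (z j) ^ 2 := by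
    intro z
    simp only [sub_sq, Finset.sum_add_distrib, Finset.sum_sub_distrib, Finset.mul_sum]
    ring_nf
  have hx2 : ∑ j : Fin D, (x j) ^ 2 = ∑ j : Fin D, (y j) ^ 2 := by
    rw [← norm_sq_sum, ← norm_sq_sum, hxy]
  rw [hexp, hexp, hx2]
  constructor <;> intro h <;> linarith
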